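/- Let F : Ω → ℝ^m be continuously differentiable satisfying the majorant condition ‖F'(x₀)†‖ ‖F'(y)-F'(x)‖ ≤ f'(‖y-x‖+‖x-x₀‖) - f'(‖x-x₀‖) on B(x₀,R). If ‖x-x₀‖ ≤ t, ‖y-x‖ ≤ v - t with 0 ≤ t < v < R, then the linearization errors satisfy ‖F'(x₀)†‖ ‖F(y) - F(x) - F'(x)(y-x)‖ ≤ (f(v) - f(t) - f'(t)(v-t)) · ‖y-x‖²/(v-t)². -/

import Mathlib

open Set ContinuousLinearMap

/-- `B` is the Moore-Penrose inverse of `A`. -/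
def IsMoorePenrose {n m : ℕ}
    (A : EuclideanSpace ℝ (Fin n) →L[ℝ] EuclideanSpace ℝ (Fin m))
    (B : EuclideanSpace ℝ (Fin m) →L[ℝ] EuclideanSpace ℝ (Fin n)) : Prop :=
  A ∘L B ∘L A = A ∧ B ∘L A ∘L B = B ∧
  ContinuousLinearMap.adjoint (A ∘L B) = A ∘L B ∧
  ContinuousLinearMap.adjoint (B ∘L A) = B ∘L A

lemma slope_slope_le {f' : ℝ → ℝ} {S : Set ℝ} (hconv : ConvexOn ℝ S f')
    {a b t p : ℝ} (ha : a ∈ S) (hb : b ∈ S) (ht : t ∈ S) (hp : p ∈ S)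
    (hab : a < b) (htp : t < p) (hat : a ≤ t) (hbp : b ≤ p) :
    (f' b - f' a) / (b - a) ≤ (f' p - f' t) / (p - t) := by
  have hap : a < p := lt_of_lt_of_le hab hbp
  have h1 : (f' b - f' a) / (b - a) ≤ (f' p - f' a) / (p - a) :=
    hconv.secant_mono ha hb hp (ne_of_gt hab) (ne_of_gt hap) hbp
  have h2 : (f' a - f' p) / (a - p) ≤ (f' t - f' p) / (t - p) :=
    hconv.secant_mono hp ha ht (ne_of_lt hap) (ne_of_lt htp) hat
  have e1 : (f' a - f' p) / (a - p) = (f' p - f' a) / (p - a) := by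
    rw [← neg_sub (f' p) (f' a), ← neg_sub p a, neg_div_neg_eq]
  have e2 : (f' t - f' p) / (t - p) = (f' p - f' t) / (p - t) := by
    rw [← neg_sub (f' p) (f' t), ← neg_sub p t, neg_div_neg_eq]
  rw [e1, e2] at h2
  exact h1.trans h2

set_option maxHeartbeats 2000000 in
/-- Bound on the linearization error of `F` in terms of the linearization error of
the majorant function `f`. -/
theorem linearization_error_bound (n m : ℕ)
    (F : EuclideanSpace ℝ (Fin n) → EuclideanSpace ℝ (Fin m))
    (F' : EuclideanSpace ℝ (Fin n) → (EuclideanSpace ℝ (Fin n) →L[ℝ] EuclideanSpace ℝ (Fin m)))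
    (x₀ : EuclideanSpace ℝ (Fin n)) (R : ℝ) (hR : 0 < R)
    (hF : ∀ x ∈ Metric.ball x₀ R, HasFDerivAt F (F' x) x)
    (B₀ : EuclideanSpace ℝ (Fin m) →L[ℝ] EuclideanSpace ℝ (Fin n))
    (hB₀ : IsMoorePenrose (F' x₀) B₀)
    (f f' : ℝ → ℝ)
    (hder : ∀ t ∈ Ico (0:ℝ) R, HasDerivWithinAt f (f' t) (Ico (0:ℝ) R) t)
    (hf0 : f 0 = 0) (hf'0 : f' 0 = -1)
    (hconv : ConvexOn ℝ (Ico (0:ℝ) R) f')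
    (hmono : StrictMonoOn f' (Ico (0:ℝ) R))
    (hmaj : ∀ x ∈ Metric.ball x₀ R, ∀ y ∈ Metric.ball x₀ R,
        ‖x - x₀‖ + ‖y - x‖ < R →
        ‖B₀‖ * ‖F' y - F' x‖ ≤ f' (‖y - x‖ + ‖x - x₀‖) - f' ‖x - x₀‖) :
    ∀ x ∈ Metric.ball x₀ R, ∀ y ∈ Metric.ball x₀ R, ∀ t v : ℝ,
      0 ≤ t → t < v → v < R → ‖x - x₀‖ ≤ t → ‖y - x‖ ≤ v - t →
      ‖B₀‖ * ‖F y - F x - F' x (y - x)‖ ≤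
        (f v - f t - f' t * (v - t)) * ‖y - x‖ ^ 2 / (v - t) ^ 2 := by
  intro x hx y hy t v ht htv hvR hxt hyx
  have hvt : (0:ℝ) < v - t := sub_pos.2 htv
  set τ := ‖y - x‖ with hτdef
  have hτ0 : 0 ≤ τ := norm_nonneg _
  set a := ‖x - x₀‖ with hadef
  have ha0 : 0 ≤ a := norm_nonneg _
  have htR : t < R := htv.trans hvR
  set c := τ ^ 2 / (v - t) ^ 2 with hcdef
  have hc0 : 0 ≤ c := by positivity
  set w := F' x (y - x) with hwdef
  set g : ℝ → EuclideanSpace ℝ (Fin m) :=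
    fun s => ‖B₀‖ • (F (x + s • (y - x)) - F x - s • w) with hgdef
  set g' : ℝ → EuclideanSpace ℝ (Fin m) :=
    fun s => ‖B₀‖ • ((F' (x + s • (y - x)) - F' x) (y - x)) with hg'def
  set B : ℝ → ℝ :=
    fun s => c * (f (t + s * (v - t)) - f t - f' t * (s * (v - t))) with hBdef
  set B' : ℝ → ℝ :=
    fun s => c * (f' (t + s * (v - t)) * (v - t) - f' t * (v - t)) with hB'def
  -- membership facts
  have hγnorm : ∀ s : ℝ, 0 ≤ s → ‖(x + s • (y - x)) - x₀‖ ≤ a + s * τ := by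
    intro s hs
    calc ‖(x + s • (y - x)) - x₀‖ = ‖(x - x₀) + s • (y - x)‖ := by rw [add_sub_right_comm]
      _ ≤ ‖x - x₀‖ + ‖s • (y - x)‖ := norm_add_le _ _
      _ = a + s * τ := by rw [norm_smul, Real.norm_of_nonneg hs]
  have hγball : ∀ s ∈ Icc (0:ℝ) 1, (x + s • (y - x)) ∈ Metric.ball x₀ R := by
    intro s hs
    rw [Metric.mem_ball, dist_eq_norm]
    have h1 : a + s * τ ≤ t + τ := by
      have : s * τ ≤ 1 * τ := mul_le_mul_of_nonneg_right hs.2 hτ0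
      nlinarith
    nlinarith [hγnorm s hs.1]
  -- derivative of g
  have hg : ∀ s ∈ Icc (0:ℝ) 1, HasDerivAt g (g' s) s := by
    intro s hs
    have hlin : HasDerivAt (fun s : ℝ => x + s • (y - x)) (y - x) s := by
      simpa using ((hasDerivAt_id s).smul_const (y - x)).const_add x
    have hcomp : HasDerivAt (fun s : ℝ => F (x + s • (y - x)))
        (F' (x + s • (y - x)) (y - x)) s :=
      (hF _ (hγball s hs)).comp_hasDerivAt s hlin
    have hsw : HasDerivAt (fun s : ℝ => s • w) w s := by
      simpa using (hasDerivAt_id s).smul_const w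
    have h := ((hcomp.sub_const (F x)).sub hsw).const_smul ‖B₀‖
    have heq : g' s = ‖B₀‖ • (F' (x + s • (y - x)) (y - x) - w) := by
      simp [hg'def, hwdef, ContinuousLinearMap.sub_apply]
    rw [show g = fun s => ‖B₀‖ • (F (x + s • (y - x)) - F x - s • w) from hgdef, heq]
    exact h
  have hgc : ContinuousOn g (Icc (0:ℝ) 1) :=
    fun s hs => ((hg s hs).continuousAt).continuousWithinAt
  -- derivative of B
  have hpmem : ∀ s ∈ Icc (0:ℝ) 1, t + s * (v - t) ∈ Ico (0:ℝ) R := by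
    intro s hs
    constructor
    · nlinarith [hs.1, hs.2]
    · have : s * (v - t) ≤ 1 * (v - t) := mul_le_mul_of_nonneg_right hs.2 hvt.le
      nlinarith
  have hB'deriv : ∀ s ∈ Ico (0:ℝ) 1, HasDerivWithinAt B (B' s) (Ici s) s := by
    intro s hs
    have hp := hpmem s ⟨hs.1, hs.2.le⟩
    have hfp : HasDerivWithinAt f (f' (t + s * (v - t))) (Ici (t + s * (v - t)))
        (t + s * (v - t)) := by
      refine (hder _ hp).mono_of_mem_nhdsWithin ?_
      rw [mem_nhdsWithin]
      exact ⟨Iio R, isOpen_Iio, hp.2, fun z hz => ⟨le_trans hp.1 hz.2, hz.1⟩⟩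
    have hlin : HasDerivWithinAt (fun s : ℝ => t + s * (v - t)) (v - t) (Ici s) s := by
      simpa using (((hasDerivAt_id s).mul_const (v - t)).const_add t).hasDerivWithinAt
    have hmap : MapsTo (fun s : ℝ => t + s * (v - t)) (Ici s) (Ici (t + s * (v - t))) := by
      intro z hz
      simp only [mem_Ici] at hz ⊢
      nlinarith [hvt]
    have hcomp := HasDerivWithinAt.comp s hfp hlin hmap
    have hlin2 : HasDerivWithinAt (fun s : ℝ => f' t * (s * (v - t))) (f' t * (v - t))
        (Ici s) s := by
      simpa using ((((hasDerivAt_id s).mul_const (v - t)).const_mul (f' t))).hasDerivWithinAt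
    exact ((hcomp.sub_const (f t)).sub hlin2).const_mul c
  have hfc : ContinuousOn f (Ico (0:ℝ) R) := fun u hu => (hder u hu).continuousWithinAt
  have hBc : ContinuousOn B (Icc (0:ℝ) 1) := by
    have hlc : ContinuousOn (fun s : ℝ => t + s * (v - t)) (Icc (0:ℝ) 1) := by fun_prop
    have h1 : ContinuousOn (fun s : ℝ => f (t + s * (v - t))) (Icc (0:ℝ) 1) :=
      hfc.comp hlc hpmem
    exact continuousOn_const.mul ((h1.sub continuousOn_const).sub
      (continuousOn_const.mul (continuousOn_id.mul continuousOn_const)))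
  -- the pointwise bound
  have hbound : ∀ s ∈ Ico (0:ℝ) 1, ‖g' s‖ ≤ B' s := by
    intro s hs
    have hs0 := hs.1
    have hγb := hγball s ⟨hs.1, hs.2.le⟩
    have hdist : ‖(x + s • (y - x)) - x‖ = s * τ := by
      rw [add_sub_cancel_left, norm_smul, Real.norm_of_nonneg hs0]
    have hsum : a + s * τ ≤ v := by
      have h1 : s * τ ≤ 1 * τ := mul_le_mul_of_nonneg_right hs.2.le hτ0
      nlinarith
    have hmaj' := hmaj x hx (x + s • (y - x)) hγb (by rw [hdist]; linarith)
    rw [hdist] at hmaj'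
    -- convexity step
    have hp := hpmem s ⟨hs.1, hs.2.le⟩
    have hamem : a ∈ Ico (0:ℝ) R := ⟨ha0, by linarith⟩
    have haτmem : a + s * τ ∈ Ico (0:ℝ) R := ⟨by positivity, by linarith⟩
    have htmem : t ∈ Ico (0:ℝ) R := ⟨ht, htR⟩
    have hstep : f' (s * τ + a) - f' a ≤ (τ / (v - t)) * (f' (t + s * (v - t)) - f' t) := by
      rcases eq_or_lt_of_le (mul_nonneg hs0 hτ0) with h0 | h0
      · -- s * τ = 0
        have hsle : t ≤ t + s * (v - t) := by nlinarith
        have hmle : f' t ≤ f' (t + s * (v - t)) := by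
          rcases eq_or_lt_of_le hsle with he | hl
          · rw [← he]
          · exact (hmono htmem hp hl).le
        have : f' (s * τ + a) - f' a = 0 := by rw [← h0, zero_add, sub_self]
        rw [this]
        have := div_nonneg hτ0 hvt.le
        nlinarith
      · -- s * τ > 0
        have hsτ : 0 < s := by nlinarith
        have hτpos : 0 < τ := by nlinarith
        have hsvt : 0 < s * (v - t) := mul_pos hsτ hvt
        have hle : a + s * τ ≤ t + s * (v - t) := by nlinarith
        have key := slope_slope_le hconv hamem haτmem htmem hp
          (by nlinarith) (by nlinarith) hxt hle
        rw [show a + s * τ - a = s * τ by ring,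
          show t + s * (v - t) - t = s * (v - t) by ring] at key
        rw [div_le_div_iff₀ (mul_pos hsτ hτpos) hsvt] at key
        rw [show s * τ + a = a + s * τ by ring, div_mul_eq_mul_div, le_div_iff₀ hvt]
        nlinarith [key]
    -- norm bound on g'
    have hnorm : ‖g' s‖ ≤ ‖B₀‖ * ‖F' (x + s • (y - x)) - F' x‖ * τ := by
      rw [hg'def]
      simp only [norm_smul, Real.norm_of_nonneg (norm_nonneg B₀)]
      rw [mul_assoc]
      exact mul_le_mul_of_nonneg_left (ContinuousLinearMap.le_opNorm _ _) (norm_nonneg B₀)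
    have hchain : ‖B₀‖ * ‖F' (x + s • (y - x)) - F' x‖ * τ ≤
        (f' (s * τ + a) - f' a) * τ :=
      mul_le_mul_of_nonneg_right hmaj' hτ0
    have hfinal : (f' (s * τ + a) - f' a) * τ ≤ B' s := by
      rw [hB'def]
      have h := mul_le_mul_of_nonneg_right hstep hτ0
      calc (f' (s * τ + a) - f' a) * τ
          ≤ (τ / (v - t)) * (f' (t + s * (v - t)) - f' t) * τ := h
        _ = c * (f' (t + s * (v - t)) * (v - t) - f' t * (v - t)) := by
            rw [hcdef]; field_simp
    linarith
  -- apply the fencing theorem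
  have ha0' : ‖g 0‖ ≤ B 0 := by
    simp [hgdef, hBdef]
  have key := image_norm_le_of_norm_deriv_right_le_deriv_boundary' hgc
    (fun s hs => (hg s (Ico_subset_Icc_self hs)).hasDerivWithinAt) ha0' hBc hB'deriv hbound
    (right_mem_Icc.2 zero_le_one)
  -- rewrite at s = 1
  have hg1 : ‖g 1‖ = ‖B₀‖ * ‖F y - F x - F' x (y - x)‖ := by
    rw [hgdef]
    simp only [one_smul, add_sub_cancel]
    rw [norm_smul, Real.norm_of_nonneg (norm_nonneg B₀)]
  have hB1 : B 1 = (f v - f t - f' t * (v - t)) * τ ^ 2 / (v - t) ^ 2 := by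
    rw [hBdef, hcdef]
    simp only [one_mul]
    rw [show t + (v - t) = v by ring]
    ring
  rw [hg1, hB1] at key
  exact key
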